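/- Assume the representation is regular with γ(Ṽ) ≥ 1 and satisfies the growth condition. Then H = [W]_Ṽ + R^∞(V), i.e. every h ∈ H can be written as h = x + y with x ∈ [W]_Ṽ and y ∈ R^∞(V). -/

import Mathlib

open scoped InnerProductSpace

noncomputable section

variable (H : Type) [NormedAddCommGroup H] [InnerProductSpace ℂ H]

/-- Words of length `n` in the alphabet `{1,…,d}`. -/
abbrev Word (d n : ℕ) := Fin n → Fin d

/-- `H_n`: the ℓ²-direct sum of copies of `H` indexed by words of length `n`. -/
abbrev Hn (d n : ℕ) := PiLp 2 (fun _ : Word d n => H)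

instance instHnCompleteSpace [CompleteSpace H] (d n : ℕ) : CompleteSpace (Hn H d n) :=
  ((PiLp.continuousLinearEquiv 2 ℂ (fun _ : Word d n => H)).isUniformEmbedding.completeSpace_congr
    (PiLp.continuousLinearEquiv 2 ℂ (fun _ : Word d n => H)).surjective).mpr inferInstance

/-- The coordinate projection `H_m → H` at the word `α`. -/
def coord (d m : ℕ) (α : Word d m) : Hn H d m →L[ℂ] H :=
  PiLp.proj 2 (fun _ : Word d m => H) α

/-- The embedding `H → H_n` into the coordinate at the word `α`. -/
def singleCLM (d n : ℕ) (α : Word d n) : H →L[ℂ] Hn H d n :=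
  ((PiLp.continuousLinearEquiv 2 ℂ (fun _ : Word d n => H)).symm.toContinuousLinearMap).comp
    (ContinuousLinearMap.pi (fun β : Word d n =>
      if β = α then ContinuousLinearMap.id ℂ H else 0))

/-- `V_α := V_{α_1} ∘ ⋯ ∘ V_{α_n}` for a word `α`. -/
def Vword {d : ℕ} (V : Fin d → H →L[ℂ] H) : (n : ℕ) → Word d n → (H →L[ℂ] H)
  | 0, _ => ContinuousLinearMap.id ℂ H
  | (n + 1), α => (V (α 0)).comp (Vword V n (fun i => α i.succ))

/-- `Ṽ_n : H_n → H`, `Ṽ_n((h_α)_α) = Σ_α V_α h_α`. -/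
def Vtilde {d : ℕ} (V : Fin d → H →L[ℂ] H) (n : ℕ) : Hn H d n →L[ℂ] H :=
  ∑ α : Word d n, (Vword H V n α).comp (coord H d n α)

/-- Extraction of the `α`-block: `H_{n+j} → H_j`. -/
def blockIn (d n j : ℕ) (α : Word d n) : Hn H d (n + j) →L[ℂ] Hn H d j :=
  ((PiLp.continuousLinearEquiv 2 ℂ (fun _ : Word d j => H)).symm.toContinuousLinearMap).comp
    (ContinuousLinearMap.pi (fun γ : Word d j => coord H d (n + j) (Fin.append α γ)))

/-- Insertion of the `α`-block: `H_k → H_{n+k}`. -/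
def blockOut (d n k : ℕ) (α : Word d n) : Hn H d k →L[ℂ] Hn H d (n + k) :=
  ((PiLp.continuousLinearEquiv 2 ℂ (fun _ : Word d (n + k) => H)).symm.toContinuousLinearMap).comp
    (ContinuousLinearMap.pi (fun β : Word d (n + k) =>
      if (fun i : Fin n => β (Fin.castAdd k i)) = α then
        coord H d k (fun i : Fin k => β (Fin.natAdd n i)) else 0))

/-- The amplification `I_{E^{⊗n}} ⊗ R : H_{n+j} → H_n` of a map `R : H_j → H`. -/
def ampV (d n j : ℕ) (R : Hn H d j →L[ℂ] H) : Hn H d (n + j) →L[ℂ] Hn H d n :=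
  ∑ α : Word d n, (singleCLM H d n α).comp (R.comp (blockIn H d n j α))

/-- The amplification `I_{E^{⊗n}} ⊗ S : H_n → H_{n+k}` of a map `S : H → H_k`. -/
def ampS (d n k : ℕ) (S : H →L[ℂ] Hn H d k) : Hn H d n →L[ℂ] Hn H d (n + k) :=
  ∑ α : Word d n, (blockOut H d n k α).comp (S.comp (coord H d n α))

/-- The amplification `I_{E^{⊗n}} ⊗ T : H_n → H_n` of a map `T : H → H`. -/
def ampHH (d n : ℕ) (T : H →L[ℂ] H) : Hn H d n →L[ℂ] Hn H d n :=
  ∑ α : Word d n, (singleCLM H d n α).comp (T.comp (coord H d n α))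

/-- The amplification `I_{E^{⊗n}} ⊗ R : H_{n+j} → H_{n+k}` of a map `R : H_j → H_k`. -/
def ampGen (d n j k : ℕ) (R : Hn H d j →L[ℂ] Hn H d k) :
    Hn H d (n + j) →L[ℂ] Hn H d (n + k) :=
  ∑ α : Word d n, (blockOut H d n k α).comp (R.comp (blockIn H d n j α))

/-- The iterates `S^{(n)} : H → H_n` of a map `S : H → H_1`:
`S^{(0)} = I_H` and `S^{(n+1)} = (I_{E^{⊗n}} ⊗ S) ∘ S^{(n)}`. -/
def Siter {d : ℕ} (S : H →L[ℂ] Hn H d 1) : (n : ℕ) → (H →L[ℂ] Hn H d n)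
  | 0 => singleCLM H d 0 (fun i => i.elim0)
  | (n + 1) => (ampS H d n 1 S).comp (Siter S n)

/-- The generalized range `R^∞(V) = ⋂_{n ≥ 1} ran Ṽ_n`. -/
def Rinf {d : ℕ} (V : Fin d → H →L[ℂ] H) : Submodule ℂ H :=
  ⨅ (n : ℕ) (_ : 1 ≤ n), LinearMap.range (Vtilde H V n).toLinearMap

/-- `H_n(K)`: families all of whose entries lie in `K` (realizing `E^{⊗n} ⊗ K`). -/
def HnSub (d n : ℕ) (K : Submodule ℂ H) : Submodule ℂ (Hn H d n) :=
  ⨅ α : Word d n, K.comap (coord H d n α).toLinearMap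

/-- The representation is regular: `ran Ṽ` is closed and
`ker Ṽ_n ⊆ ran (I_{E^{⊗n}} ⊗ Ṽ_m)` for all `n, m ≥ 1`. -/
def RepRegular {d : ℕ} (V : Fin d → H →L[ℂ] H) : Prop :=
  IsClosed (LinearMap.range (Vtilde H V 1).toLinearMap : Set H) ∧
    ∀ n m : ℕ, 1 ≤ n → 1 ≤ m →
      LinearMap.ker (Vtilde H V n).toLinearMap ≤ LinearMap.range (ampV H d n m (Vtilde H V m)).toLinearMap

/-- The reduced minimum modulus `γ(T)`. -/
def rmm {X Y : Type*} [NormedAddCommGroup X] [InnerProductSpace ℂ X]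
    [NormedAddCommGroup Y] [InnerProductSpace ℂ Y] (T : X →L[ℂ] Y) : ℝ :=
  sInf ((fun ξ => ‖T ξ‖ / Metric.infDist ξ (LinearMap.ker T.toLinearMap : Set X)) ''
    {ξ : X | ξ ∉ LinearMap.ker T.toLinearMap})

/-- The cast `H_m → H_k` along an equality `m = k` of word lengths. -/
def castHn (d : ℕ) {m k : ℕ} (h : m = k) : Hn H d m →L[ℂ] Hn H d k := by
  subst h; exact ContinuousLinearMap.id ℂ _

/-- `E^{⊗j} ⊙ K ⊆ H_{j+1}`: families all of whose `1`-blocks lie in `K ⊆ H_1`. -/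
def odotSub (d j : ℕ) (K : Submodule ℂ (Hn H d 1)) : Submodule ℂ (Hn H d (j + 1)) :=
  ⨅ α : Word d j, K.comap (blockIn H d j 1 α).toLinearMap

end

noncomputable section
set_option linter.unusedSectionVars false
variable {H : Type} [NormedAddCommGroup H] [InnerProductSpace ℂ H] {d : ℕ}

lemma coord_apply {m : ℕ} (α : Word d m) (ξ : Hn H d m) : coord H d m α ξ = ξ α := rfl

lemma singleCLM_apply {n : ℕ} (α β : Word d n) (h : H) :
    singleCLM H d n α h β = if β = α then h else 0 := by
  simp [singleCLM, ContinuousLinearMap.pi, apply_ite (fun T : H →L[ℂ] H => T h)]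

lemma blockIn_apply {n j : ℕ} (α : Word d n) (ξ : Hn H d (n + j)) (γ : Word d j) :
    blockIn H d n j α ξ γ = ξ (Fin.append α γ) := rfl

lemma blockOut_apply {n k : ℕ} (α : Word d n) (η : Hn H d k) (β : Word d (n + k)) :
    blockOut H d n k α η β =
      if (fun i : Fin n => β (Fin.castAdd k i)) = α then η (fun i : Fin k => β (Fin.natAdd n i))
      else 0 := by
  have h0 : blockOut H d n k α η β =
      (if (fun i : Fin n => β (Fin.castAdd k i)) = α then
        coord H d k (fun i : Fin k => β (Fin.natAdd n i)) else 0) η := rfl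
  rw [h0, apply_ite (fun T : Hn H d k →L[ℂ] H => T η)]
  split <;> simp [coord_apply]

lemma sum_apply_Hn {n : ℕ} {ι : Type*} (s : Finset ι) (f : ι → Hn H d n) (α : Word d n) :
    (∑ i ∈ s, f i) α = ∑ i ∈ s, f i α := by
  rw [WithLp.ofLp_sum, Finset.sum_apply]

lemma Vtilde_apply {n : ℕ} (V : Fin d → H →L[ℂ] H) (ξ : Hn H d n) :
    Vtilde H V n ξ = ∑ α : Word d n, Vword H V n α (ξ α) := by
  simp [Vtilde, ContinuousLinearMap.sum_apply, coord_apply]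

lemma ampV_apply {n j : ℕ} (R : Hn H d j →L[ℂ] H) (ξ : Hn H d (n + j)) (α : Word d n) :
    ampV H d n j R ξ α = R (blockIn H d n j α ξ) := by
  rw [ampV, ContinuousLinearMap.sum_apply, sum_apply_Hn, Finset.sum_eq_single α]
  · simp [singleCLM_apply]
  · intro b _ hb; simp [singleCLM_apply, hb.symm]
  · simp

lemma firstWord_append {n k : ℕ} (α : Word d n) (γ : Word d k) :
    (fun i : Fin n => Fin.append α γ (Fin.castAdd k i)) = α := by
  funext i; exact Fin.append_left α γ i

lemma lastWord_append {n k : ℕ} (α : Word d n) (γ : Word d k) :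
    (fun i : Fin k => Fin.append α γ (Fin.natAdd n i)) = γ := by
  funext i; exact Fin.append_right α γ i

lemma append_first_last {n k : ℕ} (β : Word d (n + k)) :
    Fin.append (fun i : Fin n => β (Fin.castAdd k i)) (fun i : Fin k => β (Fin.natAdd n i)) = β := by
  funext j
  refine Fin.addCases (fun i => ?_) (fun i => ?_) j
  · rw [Fin.append_left]
  · rw [Fin.append_right]

lemma ampS_apply {n k : ℕ} (S : H →L[ℂ] Hn H d k) (ξ : Hn H d n) (β : Word d (n + k)) :
    ampS H d n k S ξ β =
      S (ξ (fun i : Fin n => β (Fin.castAdd k i))) (fun i : Fin k => β (Fin.natAdd n i)) := by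
  rw [ampS, ContinuousLinearMap.sum_apply, sum_apply_Hn,
    Finset.sum_eq_single (fun i : Fin n => β (Fin.castAdd k i))]
  · simp [blockOut_apply, coord_apply]
  · intro b _ hb
    simp only [ContinuousLinearMap.comp_apply, blockOut_apply]
    rw [if_neg hb.symm]
  · simp

lemma ampHH_apply {n : ℕ} (T : H →L[ℂ] H) (ξ : Hn H d n) (α : Word d n) :
    ampHH H d n T ξ α = T (ξ α) := by
  rw [ampHH, ContinuousLinearMap.sum_apply, sum_apply_Hn, Finset.sum_eq_single α]
  · simp [singleCLM_apply, coord_apply]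
  · intro b _ hb; simp [singleCLM_apply, hb.symm]
  · simp

lemma ampGen_apply {n j k : ℕ} (R : Hn H d j →L[ℂ] Hn H d k) (ξ : Hn H d (n + j))
    (β : Word d (n + k)) :
    ampGen H d n j k R ξ β =
      R (blockIn H d n j (fun i : Fin n => β (Fin.castAdd k i)) ξ)
        (fun i : Fin k => β (Fin.natAdd n i)) := by
  rw [ampGen, ContinuousLinearMap.sum_apply, sum_apply_Hn,
    Finset.sum_eq_single (fun i : Fin n => β (Fin.castAdd k i))]
  · simp [blockOut_apply]
  · intro b _ hb
    simp only [ContinuousLinearMap.comp_apply, blockOut_apply]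
    rw [if_neg hb.symm]
  · simp

end
noncomputable section
set_option linter.unusedSectionVars false
set_option maxHeartbeats 1000000
variable {H : Type} [NormedAddCommGroup H] [InnerProductSpace ℂ H] {d : ℕ}

def wordEquiv (d n k : ℕ) : Word d (n + k) ≃ Word d n × Word d k where
  toFun β := (fun i => β (Fin.castAdd k i), fun i => β (Fin.natAdd n i))
  invFun p := Fin.append p.1 p.2
  left_inv β := append_first_last β
  right_inv p := by
    cases p with
    | mk a b => simp only [firstWord_append, lastWord_append]

lemma Hn_ext {n : ℕ} {ξ η : Hn H d n} (h : ∀ α, ξ α = η α) : ξ = η := PiLp.ext h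

lemma sub_apply_Hn {n : ℕ} (ξ η : Hn H d n) (α : Word d n) : (ξ - η) α = ξ α - η α := rfl

instance : Unique (Word d 0) := ⟨⟨fun i => i.elim0⟩, fun a => funext fun i => i.elim0⟩

lemma Vtilde_zero_apply (V : Fin d → H →L[ℂ] H) (ξ : Hn H d 0) :
    Vtilde H V 0 ξ = ξ (fun i => i.elim0) := by
  rw [Vtilde_apply, Fintype.sum_unique]
  rfl

lemma Siter_zero_apply (S : H →L[ℂ] Hn H d 1) (h : H) (α : Word d 0) :
    Siter H S 0 h α = h := by
  show singleCLM H d 0 _ h α = h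
  rw [singleCLM_apply, if_pos (Subsingleton.elim _ _)]

lemma Vword_one (V : Fin d → H →L[ℂ] H) (γ : Word d 1) (x : H) :
    Vword H V 1 γ x = V (γ 0) x := rfl

lemma succ_tail_append {n : ℕ} (α : Word d (n + 1)) (γ : Word d 1) :
    (fun i : Fin (n + 1) => Fin.append α γ i.succ) =
      Fin.append (fun i : Fin n => α i.succ) γ := by
  funext i
  refine Fin.addCases (fun i' => ?_) (fun i' => ?_) i
  · have h1 : (Fin.castAdd 1 i' : Fin (n + 1)).succ = Fin.castAdd 1 i'.succ := by
      ext; simp [Fin.castAdd]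
    rw [h1, Fin.append_left, Fin.append_left]
  · have h0 : i' = 0 := Subsingleton.elim _ _
    subst h0
    have h1 : (Fin.natAdd n (0 : Fin 1)).succ = Fin.natAdd (n + 1) (0 : Fin 1) := by
      ext; simp
    rw [h1, Fin.append_right, Fin.append_right]

lemma Vword_append_one (V : Fin d → H →L[ℂ] H) :
    ∀ (n : ℕ) (α : Word d n) (γ : Word d 1),
      Vword H V (n + 1) (Fin.append α γ) = (Vword H V n α).comp (V (γ 0)) := by
  intro n
  induction n with
  | zero =>
    intro α γ
    have h0 : (0 : Fin (0 + 1)) = Fin.natAdd 0 (0 : Fin 1) := by ext; simp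
    ext x
    show V (Fin.append α γ 0) x = V (γ 0) x
    rw [h0, Fin.append_right]
    exact congrArg (fun t => V (γ t) x) (Subsingleton.elim _ _)
  | succ n ih =>
    intro α γ
    have h0 : (0 : Fin (n + 1 + 1)) = Fin.castAdd 1 (0 : Fin (n + 1)) := by ext; simp
    show (V (Fin.append α γ 0)).comp (Vword H V (n + 1) (fun i => Fin.append α γ i.succ)) = _
    rw [h0, Fin.append_left, succ_tail_append, ih]
    rfl

lemma Vtilde_succ (V : Fin d → H →L[ℂ] H) (n : ℕ) :
    Vtilde H V (n + 1) = (Vtilde H V n).comp (ampV H d n 1 (Vtilde H V 1)) := by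
  ext ξ
  rw [ContinuousLinearMap.comp_apply, Vtilde_apply, Vtilde_apply]
  rw [← (wordEquiv d n 1).symm.sum_comp (fun β => Vword H V (n + 1) β (ξ β))]
  rw [Fintype.sum_prod_type]
  refine Finset.sum_congr rfl (fun α _ => ?_)
  rw [ampV_apply, Vtilde_apply, map_sum]
  refine Finset.sum_congr rfl (fun γ _ => ?_)
  show Vword H V (n + 1) (Fin.append α γ) (ξ (Fin.append α γ)) = _
  rw [Vword_append_one, blockIn_apply]
  rfl

lemma blockIn_ampS {n : ℕ} (S : H →L[ℂ] Hn H d 1) (ξ : Hn H d n) (α : Word d n) :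
    blockIn H d n 1 α (ampS H d n 1 S ξ) = S (ξ α) := by
  refine Hn_ext (fun γ => ?_)
  rw [blockIn_apply, ampS_apply, firstWord_append, lastWord_append]

lemma ampV_comp_ampS {n : ℕ} (R : Hn H d 1 →L[ℂ] H) (S : H →L[ℂ] Hn H d 1) :
    (ampV H d n 1 R).comp (ampS H d n 1 S) = ampHH H d n (R.comp S) := by
  refine ContinuousLinearMap.ext fun ξ => Hn_ext (fun α => ?_)
  rw [ContinuousLinearMap.comp_apply, ampV_apply, ampHH_apply, blockIn_ampS]
  rfl

lemma ampGen_comp_ampS {n : ℕ} (Q : Hn H d 1 →L[ℂ] Hn H d 1) (S : H →L[ℂ] Hn H d 1) :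
    (ampGen H d n 1 1 Q).comp (ampS H d n 1 S) = ampS H d n 1 (Q.comp S) := by
  refine ContinuousLinearMap.ext fun ξ => Hn_ext (fun β => ?_)
  rw [ContinuousLinearMap.comp_apply, ampGen_apply, blockIn_ampS, ampS_apply]
  rfl

lemma ampHH_id {n : ℕ} : ampHH H d n (ContinuousLinearMap.id ℂ H) = ContinuousLinearMap.id ℂ _ :=
  ContinuousLinearMap.ext fun ξ => Hn_ext (fun α => by rw [ampHH_apply]; rfl)

lemma norm_sq_Hn {n : ℕ} (ξ : Hn H d n) : ‖ξ‖ ^ 2 = ∑ α : Word d n, ‖ξ α‖ ^ 2 :=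
  PiLp.norm_sq_eq_of_L2 _ ξ

lemma norm_sq_Hn_group {n k : ℕ} (ξ : Hn H d (n + k)) :
    ‖ξ‖ ^ 2 = ∑ α : Word d n, ‖blockIn H d n k α ξ‖ ^ 2 := by
  rw [norm_sq_Hn]
  rw [← (wordEquiv d n k).symm.sum_comp (fun β => ‖ξ β‖ ^ 2)]
  rw [Fintype.sum_prod_type]
  refine Finset.sum_congr rfl (fun α _ => ?_)
  rw [norm_sq_Hn]
  refine Finset.sum_congr rfl (fun γ _ => ?_)
  rw [blockIn_apply]
  rfl

lemma norm_sq_ampS {n : ℕ} (S : H →L[ℂ] Hn H d 1) (ξ : Hn H d n) :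
    ‖ampS H d n 1 S ξ‖ ^ 2 = ∑ α : Word d n, ‖S (ξ α)‖ ^ 2 := by
  rw [norm_sq_Hn_group]
  exact Finset.sum_congr rfl (fun α _ => by rw [blockIn_ampS])

lemma norm_ampS_le {n : ℕ} (S : H →L[ℂ] Hn H d 1) (hS : ∀ x, ‖S x‖ ≤ ‖x‖) (ξ : Hn H d n) :
    ‖ampS H d n 1 S ξ‖ ≤ ‖ξ‖ := by
  have h2 : ‖ampS H d n 1 S ξ‖ ^ 2 ≤ ‖ξ‖ ^ 2 := by
    rw [norm_sq_ampS, norm_sq_Hn]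
    exact Finset.sum_le_sum (fun α _ => by
      have := hS (ξ α)
      nlinarith [norm_nonneg (S (ξ α)), norm_nonneg (ξ α)])
  nlinarith [norm_nonneg (ampS H d n 1 S ξ), norm_nonneg ξ]

lemma norm_ampHH_le {n : ℕ} (T : H →L[ℂ] H) (hT : ∀ x, ‖T x‖ ≤ ‖x‖) (ξ : Hn H d n) :
    ‖ampHH H d n T ξ‖ ≤ ‖ξ‖ := by
  have h2 : ‖ampHH H d n T ξ‖ ^ 2 ≤ ‖ξ‖ ^ 2 := by
    rw [norm_sq_Hn, norm_sq_Hn]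
    refine Finset.sum_le_sum (fun α _ => ?_)
    rw [ampHH_apply]
    have := hT (ξ α)
    nlinarith [norm_nonneg (T (ξ α)), norm_nonneg (ξ α)]
  nlinarith [norm_nonneg (ampHH H d n T ξ), norm_nonneg ξ]

end
noncomputable section
set_option linter.unusedSectionVars false
set_option maxHeartbeats 1000000

open scoped InnerProductSpace ComplexConjugate

section Hilbert
variable {X Y : Type*} [NormedAddCommGroup X] [InnerProductSpace ℂ X]
  [NormedAddCommGroup Y] [InnerProductSpace ℂ Y]

lemma selfadj_inner [CompleteSpace X] {P : X →L[ℂ] X} (hP : IsSelfAdjoint P) (x y : X) :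
    ⟪P x, y⟫_ℂ = ⟪x, P y⟫_ℂ := by
  rw [← ContinuousLinearMap.adjoint_inner_left P y x,
    ContinuousLinearMap.isSelfAdjoint_iff'.mp hP]

/-- A self-adjoint idempotent is a contraction. -/
lemma selfadj_idem_contraction [CompleteSpace X] {P : X →L[ℂ] X} (hP : IsSelfAdjoint P)
    (hidem : ∀ x, P (P x) = P x) (x : X) : ‖P x‖ ≤ ‖x‖ := by
  have h1 : (‖P x‖ : ℝ) ^ 2 = RCLike.re ⟪P x, P x⟫_ℂ := by
    rw [← inner_self_eq_norm_sq (𝕜 := ℂ)]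
  have h2 : ⟪P x, P x⟫_ℂ = ⟪x, P (P x)⟫_ℂ := selfadj_inner hP x (P x)
  rw [hidem] at h2
  have h3 : RCLike.re ⟪x, P x⟫_ℂ ≤ ‖x‖ * ‖P x‖ := re_inner_le_norm x (P x)
  rcases eq_or_lt_of_le (norm_nonneg (P x)) with h0 | h0
  · rw [← h0]; exact norm_nonneg x
  · have : ‖P x‖ ^ 2 ≤ ‖x‖ * ‖P x‖ := by rw [h1, h2]; exact h3
    nlinarith

/-- If `T` has closed range and `N` is a closed submodule containing `ker T`, then `T '' N`
is closed. -/
lemma image_closed [CompleteSpace X] [CompleteSpace Y] (T : X →L[ℂ] Y)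
    (hr : IsClosed (LinearMap.range T.toLinearMap : Set Y)) (N : Submodule ℂ X)
    (hN : IsClosed (N : Set X)) (hker : LinearMap.ker T.toLinearMap ≤ N) :
    IsClosed (T '' (N : Set X)) := by
  have hKcl : IsClosed ((LinearMap.ker T.toLinearMap : Submodule ℂ X) : Set X) := ContinuousLinearMap.isClosed_ker T
  haveI : CompleteSpace (LinearMap.ker T.toLinearMap) := hKcl.completeSpace_coe
  haveI : CompleteSpace (LinearMap.range T.toLinearMap) := hr.completeSpace_coe
  set K := LinearMap.ker T.toLinearMap
  set PK := K.orthogonalProjectionOnto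
  -- open mapping constant
  obtain ⟨C, hC0, hC⟩ := ContinuousLinearMap.exists_preimage_norm_le
    (T.codRestrict (LinearMap.range T.toLinearMap) (fun x => LinearMap.mem_range_self _ x))
    (fun z => by
      obtain ⟨x, hx⟩ := z.2
      exact ⟨x, Subtype.ext hx⟩)
  have key : ∀ x : X, ‖x - (PK x : X)‖ ≤ C * ‖T x‖ := by
    intro x
    obtain ⟨u, hu1, hu2⟩ := hC ⟨T x, LinearMap.mem_range_self _ x⟩
    have hTu : T u = T x := congrArg Subtype.val hu1
    have hxu : x - u ∈ K := by
      simp only [K, LinearMap.mem_ker, map_sub, ContinuousLinearMap.coe_coe, hTu, sub_self]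
    have heq : x - (PK x : X) = u - (PK u : X) := by
      have h1 : (PK (x - u) : X) = x - u := by
        exact Submodule.starProjection_eq_self_iff.mpr hxu
      have h2 : (PK (x - u) : X) = (PK x : X) - (PK u : X) := by
        rw [map_sub]; rfl
      rw [h2] at h1
      have h3 : x - (PK x : X) - (u - (PK u : X)) = (x - u) - ((PK x : X) - (PK u : X)) := by
        abel
      rw [← h1, sub_self] at h3
      exact sub_eq_zero.mp h3
    have hle : ‖u - (PK u : X)‖ ≤ ‖u‖ := by
      have h4 : u - (PK u : X) = (Kᗮ.orthogonalProjectionOnto u : X) := by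
        exact (Submodule.starProjection_orthogonal_val u).symm
      rw [h4]
      calc ‖(Kᗮ.orthogonalProjectionOnto u : X)‖ = ‖Kᗮ.orthogonalProjectionOnto u‖ := rfl
        _ ≤ ‖Kᗮ.orthogonalProjectionOnto‖ * ‖u‖ := (Kᗮ.orthogonalProjectionOnto).le_opNorm u
        _ ≤ 1 * ‖u‖ := by
            exact mul_le_mul_of_nonneg_right (Submodule.orthogonalProjectionOnto_norm_le _) (norm_nonneg u)
        _ = ‖u‖ := one_mul _
    calc ‖x - (PK x : X)‖ = ‖u - (PK u : X)‖ := by rw [heq]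
      _ ≤ ‖u‖ := hle
      _ ≤ C * ‖(⟨T x, _⟩ : LinearMap.range T.toLinearMap)‖ := hu2
      _ = C * ‖T x‖ := rfl
  -- sequential closedness
  rw [← isSeqClosed_iff_isClosed]
  intro x y hx hxy
  choose w hw hTw using hx
  set z := fun k => w k - (PK (w k) : X) with hz
  have hzN : ∀ k, z k ∈ N := fun k => N.sub_mem (hw k) (hker (PK (w k)).2)
  have hTz : ∀ k, T (z k) = x k := by
    intro k
    have : T ((PK (w k) : X)) = 0 := (PK (w k)).2
    simp [hz, map_sub, this, hTw k]
  have hzdiff : ∀ j k, ‖z j - z k‖ ≤ C * ‖x j - x k‖ := by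
    intro j k
    have h5 : z j - z k = (w j - w k) - (PK (w j - w k) : X) := by
      have : (PK (w j - w k) : X) = (PK (w j) : X) - (PK (w k) : X) := by rw [map_sub]; rfl
      rw [this, hz]; exact sub_sub_sub_comm _ _ _ _
    have h6 : T (w j - w k) = x j - x k := by rw [map_sub, hTw, hTw]
    rw [h5, ← h6]
    exact key _
  have hcx : CauchySeq x := hxy.cauchySeq
  have hcz : CauchySeq z := by
    rw [Metric.cauchySeq_iff] at hcx ⊢
    intro ε hε
    obtain ⟨Nn, hNn⟩ := hcx (ε / C) (by positivity)
    refine ⟨Nn, fun m hm n hn => ?_⟩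
    have := hNn m hm n hn
    rw [dist_eq_norm] at this ⊢
    calc ‖z m - z n‖ ≤ C * ‖x m - x n‖ := hzdiff m n
      _ < C * (ε / C) := by
          exact mul_lt_mul_of_pos_left this hC0
      _ = ε := by field_simp
  obtain ⟨zl, hzl⟩ := cauchySeq_tendsto_of_complete hcz
  refine ⟨zl, ?_, ?_⟩
  · exact hN.mem_of_tendsto hzl (Filter.Eventually.of_forall hzN)
  · have : Filter.Tendsto (fun k => T (z k)) Filter.atTop (nhds (T zl)) :=
      (T.continuous.tendsto zl).comp hzl
    rw [show (fun k => T (z k)) = x from funext hTz] at this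
    exact tendsto_nhds_unique this hxy

/-- Nested nonempty bounded closed convex subsets of a Hilbert space have a common point. -/
lemma nested_convex_nonempty_inter [CompleteSpace X] (D : ℕ → Set X)
    (hne : ∀ n, (D n).Nonempty) (hcl : ∀ n, IsClosed (D n)) (hcv : ∀ n, Convex ℝ (D n))
    (hmono : ∀ {n m : ℕ}, n ≤ m → D m ⊆ D n) (R : ℝ)
    (hbd : ∀ n, ∀ x ∈ D n, ‖x‖ ≤ R) : ∃ y, ∀ n, y ∈ D n := by
  letI : InnerProductSpace ℝ X := InnerProductSpace.rclikeToReal ℂ X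
  have hmin : ∀ n, ∃ v ∈ D n, ‖v‖ = ⨅ w : D n, ‖(w : X)‖ := by
    intro n
    obtain ⟨v, hv, hv2⟩ := exists_norm_eq_iInf_of_complete_convex ⟨(hne n).some, (hne n).choose_spec⟩
      ((hcl n).isComplete) (hcv n) (0 : X)
    refine ⟨v, hv, ?_⟩
    rw [← norm_neg, ← zero_sub, hv2]
    exact iInf_congr fun w => by rw [zero_sub, norm_neg]
  choose y hyD hy using hmin
  set δ : ℕ → ℝ := fun n => ⨅ w : D n, ‖(w : X)‖ with hδ
  have hyδ : ∀ n, ‖y n‖ = δ n := hy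
  have hbdd : ∀ n, BddBelow (Set.range fun w : D n => ‖(w : X)‖) :=
    fun n => ⟨0, by rintro _ ⟨w, rfl⟩; exact norm_nonneg _⟩
  have hδle : ∀ n, ∀ x ∈ D n, δ n ≤ ‖x‖ := by
    intro n x hx
    exact ciInf_le (hbdd n) ⟨x, hx⟩
  have hδmono : Monotone δ := by
    intro n m hnm
    rw [← hyδ m]
    exact hδle n _ (hmono hnm (hyD m))
  have hδbd : ∀ n, δ n ≤ R := fun n => by rw [← hyδ n]; exact hbd n _ (hyD n)
  have hδ0 : ∀ n, 0 ≤ δ n := fun n => by rw [← hyδ n]; exact norm_nonneg _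
  -- limit of δ
  set L := ⨆ n, δ n with hL
  have hδL : ∀ n, δ n ≤ L := fun n => le_ciSup ⟨R, by rintro _ ⟨m, rfl⟩; exact hδbd m⟩ n
  have hLtend : Filter.Tendsto δ Filter.atTop (nhds L) :=
    tendsto_atTop_ciSup hδmono ⟨R, by rintro _ ⟨m, rfl⟩; exact hδbd m⟩
  -- Cauchy
  have hkey : ∀ n m, n ≤ m → ‖y n - y m‖ ^ 2 ≤ 2 * (L ^ 2 - δ n ^ 2) := by
    intro n m hnm
    have hmid : (2⁻¹ : ℝ) • y n + (2⁻¹ : ℝ) • y m ∈ D n :=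
      (hcv n) (hyD n) (hmono hnm (hyD m)) (by norm_num) (by norm_num) (by norm_num)
    have h1 : δ n ≤ ‖(2⁻¹ : ℝ) • y n + (2⁻¹ : ℝ) • y m‖ := hδle n _ hmid
    have h2 : ‖(2⁻¹ : ℝ) • y n + (2⁻¹ : ℝ) • y m‖ = ‖y n + y m‖ / 2 := by
      rw [← smul_add, norm_smul]
      simp [abs_of_nonneg]
      ring
    have hpar := parallelogram_law_with_norm ℂ (y n) (y m)
    have h3 : ‖y n‖ = δ n := hyδ n
    have h4 : ‖y m‖ = δ m := hyδ m
    have h5 : δ m ≤ L := hδL m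
    have h6 : δ n ≤ δ m := hδmono hnm
    have h7 : 2 * δ n ≤ ‖y n + y m‖ := by
      rw [h2] at h1; linarith
    have h8 : (2 * δ n) ^ 2 ≤ ‖y n + y m‖ ^ 2 := by
      have h9 := norm_nonneg (y n + y m)
      have h10 := hδ0 n
      nlinarith
    have h0n := hδ0 n
    have h0m := hδ0 m
    nlinarith [sq_nonneg (‖y n - y m‖), sq_nonneg (L - δ m)]
  have hcy : CauchySeq y := by
    rw [Metric.cauchySeq_iff]
    intro ε hε
    -- choose N with L^2 - δ N ^ 2 < ε^2/4
    have hL2 : Filter.Tendsto (fun n => 2 * (L ^ 2 - δ n ^ 2)) Filter.atTop (nhds 0) := by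
      have : Filter.Tendsto (fun n => δ n ^ 2) Filter.atTop (nhds (L ^ 2)) := hLtend.pow 2
      have h2 := ((tendsto_const_nhds (x := L ^ 2)).sub this).const_mul (2 : ℝ)
      simpa using h2
    have hev := hL2.eventually (eventually_lt_nhds (show (0:ℝ) < ε ^ 2 / 2 by positivity))
    obtain ⟨Nn, hNn⟩ := hev.exists_forall_of_atTop
    refine ⟨Nn, fun m hm n hn => ?_⟩
    rw [dist_eq_norm]
    rcases le_total m n with h | h
    · have := hkey m n h
      have h2 := hNn m hm
      have := norm_nonneg (y m - y n)
      nlinarith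
    · have := hkey n m h
      have h2 := hNn n hn
      rw [norm_sub_rev]
      have := norm_nonneg (y n - y m)
      nlinarith
  obtain ⟨yl, hyl⟩ := cauchySeq_tendsto_of_complete hcy
  refine ⟨yl, fun n => ?_⟩
  refine (hcl n).mem_of_tendsto hyl ?_
  filter_upwards [Filter.eventually_ge_atTop n] with m hm
  exact hmono hm (hyD m)

end Hilbert
end
noncomputable section
set_option linter.unusedSectionVars false
set_option maxHeartbeats 2000000

open scoped InnerProductSpace ComplexConjugate

variable {H : Type} [NormedAddCommGroup H] [InnerProductSpace ℂ H] {d : ℕ}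

lemma mem_HnSub {n : ℕ} {K : Submodule ℂ H} {ξ : Hn H d n} :
    ξ ∈ HnSub H d n K ↔ ∀ α, ξ α ∈ K := by
  simp only [HnSub, Submodule.mem_iInf, Submodule.mem_comap]
  rfl

lemma isClosed_HnSub {n : ℕ} {K : Submodule ℂ H} (hK : IsClosed (K : Set H)) :
    IsClosed ((HnSub H d n K : Submodule ℂ (Hn H d n)) : Set (Hn H d n)) := by
  have : ((HnSub H d n K : Submodule ℂ (Hn H d n)) : Set (Hn H d n)) =
      ⋂ α : Word d n, (coord H d n α) ⁻¹' (K : Set H) := by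
    ext ξ
    simp only [SetLike.mem_coe, mem_HnSub, Set.mem_iInter, Set.mem_preimage]
    rfl
  rw [this]
  exact isClosed_iInter fun α => hK.preimage (coord H d n α).continuous

lemma blockIn_blockOut {n k : ℕ} (α α' : Word d n) (ζ : Hn H d k) :
    blockIn H d n k α (blockOut H d n k α' ζ) = if α = α' then ζ else 0 := by
  refine Hn_ext (fun γ => ?_)
  rw [blockIn_apply, blockOut_apply, firstWord_append, lastWord_append]
  split <;> rfl

lemma range_ampV {n : ℕ} (R : Hn H d 1 →L[ℂ] H) :
    LinearMap.range (ampV H d n 1 R).toLinearMap = HnSub H d n (LinearMap.range R.toLinearMap) := by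
  apply le_antisymm
  · rintro _ ⟨ξ, rfl⟩
    rw [mem_HnSub]
    intro α
    rw [ContinuousLinearMap.coe_coe, ampV_apply]
    exact LinearMap.mem_range_self _ _
  · intro η hη
    rw [mem_HnSub] at hη
    choose ζ hζ using fun α => hη α
    refine ⟨∑ α : Word d n, blockOut H d n 1 α (ζ α), ?_⟩
    refine Hn_ext (fun α' => ?_)
    rw [ContinuousLinearMap.coe_coe, ampV_apply, map_sum]
    have h13 : ∑ α : Word d n, blockIn H d n 1 α' (blockOut H d n 1 α (ζ α)) = ζ α' := by
      rw [Finset.sum_congr rfl (fun α _ => blockIn_blockOut α' α (ζ α)),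
        Finset.sum_ite_eq (Finset.univ : Finset (Word d n)) α' ζ, if_pos (Finset.mem_univ _)]
    rw [h13]
    exact hζ α'

variable [CompleteSpace H]

lemma range_Vtilde_succ_le (V : Fin d → H →L[ℂ] H) (n : ℕ) :
    LinearMap.range (Vtilde H V (n + 1)).toLinearMap ≤ LinearMap.range (Vtilde H V n).toLinearMap := by
  rintro _ ⟨ξ, rfl⟩
  rw [Vtilde_succ]
  exact LinearMap.mem_range_self _ _

lemma range_Vtilde_mono (V : Fin d → H →L[ℂ] H) {n m : ℕ} (h : n ≤ m) :
    LinearMap.range (Vtilde H V m).toLinearMap ≤ LinearMap.range (Vtilde H V n).toLinearMap := by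
  induction m with
  | zero => rw [Nat.le_zero.mp h]
  | succ m ih =>
    rcases Nat.lt_or_ge n (m + 1) with h' | h'
    · exact le_trans (range_Vtilde_succ_le V m) (ih (Nat.lt_succ_iff.mp h'))
    · rw [Nat.le_antisymm h h']

lemma isClosed_range_Vtilde (V : Fin d → H →L[ℂ] H) (hreg : RepRegular H V) :
    ∀ n : ℕ, IsClosed ((LinearMap.range (Vtilde H V (n + 1)).toLinearMap : Submodule ℂ H) : Set H) := by
  intro n
  induction n with
  | zero => exact hreg.1
  | succ n ih =>
    have hcomp : Vtilde H V (n + 2) = (Vtilde H V (n + 1)).comp (ampV H d (n + 1) 1 (Vtilde H V 1)) :=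
      Vtilde_succ V (n + 1)
    have hset : ((LinearMap.range (Vtilde H V (n + 2)).toLinearMap : Submodule ℂ H) : Set H) =
        (Vtilde H V (n + 1)) '' ((HnSub H d (n + 1) (LinearMap.range (Vtilde H V 1).toLinearMap) :
          Submodule ℂ (Hn H d (n + 1))) : Set (Hn H d (n + 1))) := by
      ext y
      constructor
      · rintro ⟨ξ, rfl⟩
        refine ⟨ampV H d (n + 1) 1 (Vtilde H V 1) ξ, ?_, ?_⟩
        · have := (range_ampV (Vtilde H V 1) (n := n + 1)).le
            (LinearMap.mem_range_self (ampV H d (n + 1) 1 (Vtilde H V 1)).toLinearMap ξ)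
          exact this
        · rw [hcomp]; rfl
      · rintro ⟨η, hη, rfl⟩
        have : η ∈ LinearMap.range (ampV H d (n + 1) 1 (Vtilde H V 1)).toLinearMap := by
          rw [range_ampV]; exact hη
        obtain ⟨ξ, rfl⟩ := this
        rw [ContinuousLinearMap.coe_coe, ← ContinuousLinearMap.comp_apply, ← hcomp]
        exact LinearMap.mem_range_self _ _
    rw [hset]
    refine image_closed (Vtilde H V (n + 1)) ih _ (isClosed_HnSub hreg.1) ?_
    have := hreg.2 (n + 1) 1 (by omega) le_rfl
    rwa [range_ampV] at this
open scoped InnerProductSpace ComplexConjugate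

set_option maxHeartbeats 2000000 in
theorem stmt_17 (H : Type) [NormedAddCommGroup H] [InnerProductSpace ℂ H] [CompleteSpace H]
    (d : ℕ) (hd : 1 ≤ d) (V : Fin d → H →L[ℂ] H)
    (hreg : RepRegular H V) (hγ : 1 ≤ rmm (Vtilde H V 1))
    (Vdag : H →L[ℂ] Hn H d 1)
    (mp1 : (Vtilde H V 1).comp (Vdag.comp (Vtilde H V 1)) = Vtilde H V 1)
    (mp2 : Vdag.comp ((Vtilde H V 1).comp Vdag) = Vdag)
    (mp3 : IsSelfAdjoint ((Vtilde H V 1).comp Vdag))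
    (mp4 : IsSelfAdjoint (Vdag.comp (Vtilde H V 1)))
    (dseq : ℕ → ℝ) (hdpos : ∀ m : ℕ, 1 ≤ m → 0 < dseq m)
    (hdiv : ¬ Summable (fun m : ℕ => 1 / dseq (m + 2)))
    (hgrowth : ∀ (m : ℕ) (ξ : Hn H d (m + 1)),
      ‖Vtilde H V (m + 1) ξ‖ ^ 2 ≤
        dseq (m + 1) * (‖ampV H d m 1 (Vtilde H V 1) ξ‖ ^ 2 -
            ‖ampGen H d m 1 1 (Vdag.comp (Vtilde H V 1)) ξ‖ ^ 2) +
          ‖ampGen H d m 1 1 (Vdag.comp (Vtilde H V 1)) ξ‖ ^ 2) :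
    (⨆ n : ℕ,
      Submodule.map (Vtilde H V n).toLinearMap
        (HnSub H d n ((LinearMap.range (Vtilde H V 1).toLinearMap)ᗮ))).topologicalClosure ⊔
      Rinf H V = ⊤ := by
  classical
  set Vt1 := Vtilde H V 1 with hVt1
  set P : H →L[ℂ] H := Vt1.comp Vdag with hPdef
  set Q : Hn H d 1 →L[ℂ] Hn H d 1 := Vdag.comp Vt1 with hQdef
  set W := (LinearMap.range Vt1.toLinearMap)ᗮ with hWdef
  set M := ⨆ n : ℕ, Submodule.map (Vtilde H V n).toLinearMap (HnSub H d n W) with hMdef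
  rw [Submodule.eq_top_iff']
  intro h0
  -- basic operator facts
  have hPidem : ∀ x, P (P x) = P x := by
    intro x
    have h1 := DFunLike.congr_fun mp2 x
    show Vt1 (Vdag (Vt1 (Vdag x))) = Vt1 (Vdag x)
    exact congrArg Vt1 h1
  have hPcon : ∀ x, ‖P x‖ ≤ ‖x‖ := selfadj_idem_contraction mp3 hPidem
  have hPV : ∀ z, P (Vt1 z) = Vt1 z := fun z => DFunLike.congr_fun mp1 z
  have hQdag : ∀ x, Q (Vdag x) = Vdag x := fun x => DFunLike.congr_fun mp2 x
  have hVdagcon : ∀ x : H, ‖Vdag x‖ ≤ ‖x‖ := by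
    intro x
    rcases eq_or_ne (Vdag x) 0 with h | h
    · rw [h, norm_zero]; exact norm_nonneg x
    · have hQx : Q (Vdag x) = Vdag x := hQdag x
      have hperp : ∀ k ∈ LinearMap.ker Vt1.toLinearMap, ⟪Vdag x, k⟫_ℂ = 0 := by
        intro k hk
        have h1 : ⟪Q (Vdag x), k⟫_ℂ = ⟪Vdag x, Q k⟫_ℂ := selfadj_inner mp4 _ _
        have hQk : Q k = 0 := by
          show Vdag (Vt1 k) = 0
          rw [show Vt1 k = 0 from LinearMap.mem_ker.mp hk, map_zero]
        rw [hQx] at h1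
        rw [h1, hQk, inner_zero_right]
      have hker0 : Vdag x ∉ LinearMap.ker Vt1.toLinearMap := by
        intro hk
        exact h (inner_self_eq_zero.mp (hperp _ hk))
      have hperp' : ∀ k ∈ ((LinearMap.ker Vt1.toLinearMap : Submodule ℂ (Hn H d 1)) : Set (Hn H d 1)),
          ‖Vdag x‖ ≤ dist (Vdag x) k := by
        intro k hk
        rw [dist_eq_norm]
        have h2 : ‖Vdag x - k‖ ^ 2 =
            ‖Vdag x‖ ^ 2 - 2 * RCLike.re ⟪Vdag x, k⟫_ℂ + ‖k‖ ^ 2 := norm_sub_sq _ _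
        rw [hperp k hk] at h2
        rw [map_zero] at h2
        nlinarith [norm_nonneg (Vdag x - k), norm_nonneg k, norm_nonneg (Vdag x)]
      have hdist : Metric.infDist (Vdag x)
          ((LinearMap.ker Vt1.toLinearMap : Submodule ℂ (Hn H d 1)) : Set (Hn H d 1)) = ‖Vdag x‖ := by
        apply le_antisymm
        · have h3 := Metric.infDist_le_dist_of_mem (x := Vdag x)
            (Submodule.zero_mem (LinearMap.ker Vt1.toLinearMap))
          rwa [dist_zero_right] at h3
        · rw [Metric.infDist_eq_iInf]
          haveI : Nonempty ((LinearMap.ker Vt1.toLinearMap : Submodule ℂ (Hn H d 1)) : Set (Hn H d 1)) :=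
            ⟨⟨0, Submodule.zero_mem _⟩⟩
          exact le_ciInf (fun k => hperp' k k.2)
      have hrmm : rmm Vt1 = sInf ((fun ξ => ‖Vt1 ξ‖ /
          Metric.infDist ξ ((LinearMap.ker Vt1.toLinearMap : Submodule ℂ (Hn H d 1)) : Set (Hn H d 1))) ''
          {ξ : Hn H d 1 | ξ ∉ LinearMap.ker Vt1.toLinearMap}) := rfl
      have hbdd : BddBelow ((fun ξ => ‖Vt1 ξ‖ /
          Metric.infDist ξ ((LinearMap.ker Vt1.toLinearMap : Submodule ℂ (Hn H d 1)) : Set (Hn H d 1))) ''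
          {ξ : Hn H d 1 | ξ ∉ LinearMap.ker Vt1.toLinearMap}) := by
        refine ⟨0, ?_⟩
        rintro _ ⟨ξ, hξ, rfl⟩
        exact div_nonneg (norm_nonneg _) Metric.infDist_nonneg
      have hle : rmm Vt1 ≤ ‖Vt1 (Vdag x)‖ / Metric.infDist (Vdag x)
          ((LinearMap.ker Vt1.toLinearMap : Submodule ℂ (Hn H d 1)) : Set (Hn H d 1)) := by
        rw [hrmm]
        exact csInf_le hbdd ⟨Vdag x, hker0, rfl⟩
      rw [hdist] at hle
      have h1le : (1 : ℝ) ≤ ‖Vt1 (Vdag x)‖ / ‖Vdag x‖ := le_trans hγ hle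
      have hpos : 0 < ‖Vdag x‖ := norm_pos_iff.mpr h
      rw [le_div_iff₀ hpos, one_mul] at h1le
      calc ‖Vdag x‖ ≤ ‖Vt1 (Vdag x)‖ := h1le
        _ = ‖P x‖ := rfl
        _ ≤ ‖x‖ := hPcon x
  have hW : ∀ x : H, x - P x ∈ W := by
    intro x
    rw [hWdef, Submodule.mem_orthogonal]
    rintro u ⟨z, rfl⟩
    rw [inner_sub_right, ContinuousLinearMap.coe_coe]
    have h1 : ⟪Vt1 z, P x⟫_ℂ = ⟪P (Vt1 z), x⟫_ℂ := (selfadj_inner mp3 (Vt1 z) x).symm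
    rw [h1, hPV z, sub_self]
  -- the sequences
  set ξ : (n : ℕ) → Hn H d n := fun n => Siter H Vdag n h0 with hξ
  set hs : ℕ → H := fun n => Vtilde H V n (ξ n) with hhs
  have hξsucc : ∀ n, ξ (n + 1) = ampS H d n 1 Vdag (ξ n) := fun n => rfl
  have hs0 : hs 0 = h0 := by
    show Vtilde H V 0 (Siter H Vdag 0 h0) = h0
    exact (Vtilde_zero_apply V _).trans (Siter_zero_apply Vdag h0 _)
  have hssucc : ∀ n, hs (n + 1) = Vtilde H V n (ampHH H d n P (ξ n)) := by
    intro n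
    show Vtilde H V (n + 1) (ξ (n + 1)) = _
    rw [hξsucc, Vtilde_succ, ContinuousLinearMap.comp_apply,
      ← ContinuousLinearMap.comp_apply (ampV H d n 1 Vt1) (ampS H d n 1 Vdag), ampV_comp_ampS]
  have hdiffmem : ∀ n, hs n - hs (n + 1) ∈ M := by
    intro n
    have hmem : ξ n - ampHH H d n P (ξ n) ∈ HnSub H d n W := by
      rw [mem_HnSub]
      intro α
      rw [sub_apply_Hn, ampHH_apply]
      exact hW (ξ n α)
    have heq : hs n - hs (n + 1) = Vtilde H V n (ξ n - ampHH H d n P (ξ n)) := by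
      rw [hssucc n, map_sub]
    rw [heq, hMdef]
    exact le_iSup (fun n => Submodule.map (Vtilde H V n).toLinearMap (HnSub H d n W)) n
      ⟨ξ n - ampHH H d n P (ξ n), hmem, rfl⟩
  have htel : ∀ n, h0 - hs n ∈ M := by
    intro n
    induction n with
    | zero => rw [hs0, sub_self]; exact M.zero_mem
    | succ n ih =>
      have heq : h0 - hs (n + 1) = (h0 - hs n) + (hs n - hs (n + 1)) := by abel
      rw [heq]
      exact M.add_mem ih (hdiffmem n)
  have hrange : ∀ {n m : ℕ}, n ≤ m → hs m ∈ LinearMap.range (Vtilde H V n).toLinearMap :=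
    fun {n m} h => range_Vtilde_mono V h (LinearMap.mem_range_self _ (ξ m))
  -- norm estimates
  set a : ℕ → ℝ := fun n => ‖ξ n‖ ^ 2 with ha
  have hamono : ∀ n, a (n + 1) ≤ a n := by
    intro n
    have h1 : ‖ξ (n + 1)‖ ≤ ‖ξ n‖ := by
      rw [hξsucc]; exact norm_ampS_le Vdag hVdagcon (ξ n)
    have h2 := norm_nonneg (ξ (n + 1))
    show ‖ξ (n + 1)‖ ^ 2 ≤ ‖ξ n‖ ^ 2
    nlinarith [norm_nonneg (ξ n)]
  have ha0' : a 0 = ‖h0‖ ^ 2 := by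
    show ‖ξ 0‖ ^ 2 = _
    rw [norm_sq_Hn, Fintype.sum_unique]
    show ‖Siter H Vdag 0 h0 (default : Word d 0)‖ ^ 2 = _
    rw [Siter_zero_apply]
  have hanonneg : ∀ n, 0 ≤ a n := fun n => sq_nonneg _
  have haU : ∀ n, a n ≤ ‖h0‖ ^ 2 := by
    intro n
    induction n with
    | zero => exact le_of_eq ha0'
    | succ n ih => exact le_trans (hamono n) ih
  have hgrow : ∀ n, ‖hs (n + 1)‖ ^ 2 ≤ dseq (n + 1) * (a n - a (n + 1)) + a (n + 1) := by
    intro n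
    have hg := hgrowth n (ξ (n + 1))
    have e2 : ampV H d n 1 Vt1 (ξ (n + 1)) = ampHH H d n P (ξ n) := by
      rw [hξsucc, ← ContinuousLinearMap.comp_apply, ampV_comp_ampS]
    have e3 : ampGen H d n 1 1 Q (ξ (n + 1)) = ξ (n + 1) := by
      rw [hξsucc, ← ContinuousLinearMap.comp_apply, ampGen_comp_ampS]
      have hQV : Q.comp Vdag = Vdag := ContinuousLinearMap.ext hQdag
      rw [hQV]
    rw [e2, e3] at hg
    have e4 : ‖ampHH H d n P (ξ n)‖ ^ 2 ≤ a n := by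
      have h5 := norm_ampHH_le P hPcon (ξ n)
      have h6 := norm_nonneg (ampHH H d n P (ξ n))
      show _ ≤ ‖ξ n‖ ^ 2
      nlinarith [norm_nonneg (ξ n)]
    have hd := hdpos (n + 1) (by omega)
    have e5 : ‖ampHH H d n P (ξ n)‖ ^ 2 - ‖ξ (n + 1)‖ ^ 2 ≤ a n - a (n + 1) := by
      have : a (n + 1) = ‖ξ (n + 1)‖ ^ 2 := rfl
      linarith
    have e6 : dseq (n + 1) * (‖ampHH H d n P (ξ n)‖ ^ 2 - ‖ξ (n + 1)‖ ^ 2) ≤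
        dseq (n + 1) * (a n - a (n + 1)) := mul_le_mul_of_nonneg_left e5 (le_of_lt hd)
    have e7 : ‖Vtilde H V (n + 1) (ξ (n + 1))‖ = ‖hs (n + 1)‖ := rfl
    rw [e7] at hg
    have e8 : ‖ξ (n + 1)‖ ^ 2 = a (n + 1) := rfl
    linarith
  have hfreq : ∀ N : ℕ, ∃ n, N ≤ n ∧ ‖hs (n + 1)‖ ^ 2 ≤ ‖h0‖ ^ 2 + 1 := by
    intro N
    by_contra hcon
    push_neg at hcon
    have hstep : ∀ j : ℕ, 1 / dseq (N + j + 1) ≤ a (N + j) - a (N + j + 1) := by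
      intro j
      have h1 := hcon (N + j) (Nat.le_add_right N j)
      have h2 := hgrow (N + j)
      have h3 := haU (N + j + 1)
      have hd := hdpos (N + j + 1) (by omega)
      have h4 : 1 < dseq (N + j + 1) * (a (N + j) - a (N + j + 1)) := by nlinarith
      rw [div_le_iff₀ hd]
      nlinarith
    have hsum : Summable (fun j : ℕ => a (N + j) - a (N + j + 1)) := by
      apply summable_of_sum_range_le (c := a N)
      · intro j; have := hamono (N + j); linarith
      · intro n
        have h5 : ∑ i ∈ Finset.range n, (a (N + i) - a (N + i + 1)) = a N - a (N + n) := by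
          simpa [add_assoc] using Finset.sum_range_sub' (fun i => a (N + i)) n
        rw [h5]
        have := hanonneg (N + n); linarith
    have hsum2 : Summable (fun j : ℕ => 1 / dseq (N + j + 1)) := by
      refine Summable.of_nonneg_of_le (fun j => ?_) hstep hsum
      have := hdpos (N + j + 1) (by omega)
      positivity
    have hsum3 : Summable (fun t : ℕ => 1 / dseq (t + 1)) := by
      have heq : (fun j : ℕ => 1 / dseq (N + j + 1)) =
          fun j : ℕ => (fun t : ℕ => 1 / dseq (t + 1)) (j + N) := by
        funext j
        have : N + j + 1 = j + N + 1 := by omega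
        rw [this]
      rw [heq] at hsum2
      exact (summable_nat_add_iff N).mp hsum2
    exact hdiv ((summable_nat_add_iff (f := fun t : ℕ => 1 / dseq (t + 1)) 1).mpr hsum3)
  -- the nested convex sets
  set R : ℝ := Real.sqrt (‖h0‖ ^ 2 + 1) with hR
  set Mc := M.topologicalClosure with hMc
  set D : ℕ → Set H := fun n => ({z : H | h0 - z ∈ (Mc : Set H)} ∩
    ((LinearMap.range (Vtilde H V (n + 1)).toLinearMap : Submodule ℂ H) : Set H)) ∩
    Metric.closedBall 0 R with hD
  have hDne : ∀ n, (D n).Nonempty := by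
    intro n
    obtain ⟨m, hm1, hm2⟩ := hfreq (n + 1)
    refine ⟨hs (m + 1), ⟨⟨?_, ?_⟩, ?_⟩⟩
    · exact Submodule.le_topologicalClosure M (htel (m + 1))
    · exact hrange (by omega)
    · rw [Metric.mem_closedBall, dist_zero_right]
      have h6 : ‖hs (m + 1)‖ = Real.sqrt (‖hs (m + 1)‖ ^ 2) :=
        (Real.sqrt_sq (norm_nonneg _)).symm
      rw [h6, hR]
      exact Real.sqrt_le_sqrt hm2
  have hDcl : ∀ n, IsClosed (D n) := by
    intro n
    refine IsClosed.inter (IsClosed.inter ?_ (isClosed_range_Vtilde V hreg n))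
      Metric.isClosed_closedBall
    have h7 : {z : H | h0 - z ∈ (Mc : Set H)} = (fun z : H => h0 - z) ⁻¹' (Mc : Set H) := rfl
    rw [h7]
    exact M.isClosed_topologicalClosure.preimage (continuous_const.sub continuous_id)
  have hconvM : Convex ℝ (Mc : Set H) := by
    have h8 := Submodule.convex (Mc.restrictScalars ℝ)
    simpa using h8
  have hDcv : ∀ n, Convex ℝ (D n) := by
    intro n
    refine Convex.inter (Convex.inter ?_ ?_) (convex_closedBall 0 R)
    · intro z1 hz1 z2 hz2 p q hp hq hpq
      show h0 - (p • z1 + q • z2) ∈ (Mc : Set H)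
      have h9 : p • h0 + q • h0 = h0 := by rw [← add_smul, hpq, one_smul]
      have h10 : p • (h0 - z1) + q • (h0 - z2) = (p • h0 + q • h0) - (p • z1 + q • z2) := by
        rw [smul_sub, smul_sub]; abel
      have heq : h0 - (p • z1 + q • z2) = p • (h0 - z1) + q • (h0 - z2) := by
        rw [h10, h9]
      rw [heq]
      exact hconvM hz1 hz2 hp hq hpq
    · have h11 := Submodule.convex ((LinearMap.range (Vtilde H V (n + 1)).toLinearMap).restrictScalars ℝ)
      simpa using h11
  have hDmono : ∀ {n m : ℕ}, n ≤ m → D m ⊆ D n := by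
    intro n m hnm z hz
    exact ⟨⟨hz.1.1, range_Vtilde_mono V (by omega) hz.1.2⟩, hz.2⟩
  obtain ⟨y, hy⟩ := nested_convex_nonempty_inter D hDne hDcl hDcv hDmono R
    (fun n x hx => by
      have h12 := hx.2
      rwa [Metric.mem_closedBall, dist_zero_right] at h12)
  have hx : h0 - y ∈ Mc := (hy 0).1.1
  have hyR : y ∈ Rinf H V := by
    rw [Rinf]
    simp only [Submodule.mem_iInf]
    intro n hn
    obtain ⟨k, rfl⟩ : ∃ k, n = k + 1 := ⟨n - 1, by omega⟩
    exact (hy k).1.2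
  have hdecomp : h0 = (h0 - y) + y := by abel
  rw [hdecomp]
  exact Submodule.add_mem _ (Submodule.mem_sup_left hx) (Submodule.mem_sup_right hyR)
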